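/- Characterization of O_HD networks: Let G be a network. Then even_res(p,q) = odd_res(p,q) for every pair of vertices p ≠ q of G if and only if every harmonic function on G of finite energy is constant. -/

import Mathlib

open scoped ENNReal
open Filter

variable {V : Type*}

/-- A *flow* on a graph: an antisymmetric function on ordered pairs of vertices
that vanishes on non-adjacent pairs. -/
def IsFlow (G : SimpleGraph V) (θ : V → V → ℝ) : Prop :=
  (∀ u v, θ u v = -θ v u) ∧ ∀ u v, ¬G.Adj u v → θ u v = 0

/-- The divergence (source strength) of a flow at a vertex. -/
noncomputable def divg (G : SimpleGraph V) [G.LocallyFinite] (θ : V → V → ℝ) (v : V) : ℝ :=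
  ∑ u ∈ G.neighborFinset v, θ v u

/-- The energy `(1/2) ∑ r(u,v) θ(u,v)²` dissipated by a flow, valued in `[0,∞]`. -/
noncomputable def energy (r θ : V → V → ℝ) : ℝ≥0∞ :=
  2⁻¹ * ∑' p : V × V, ENNReal.ofReal (r p.1 p.2 * θ p.1 p.2 ^ 2)

open Classical in
/-- The source distribution with a unit source at `p` and a unit sink at `q`. -/
noncomputable def pointSource (p q v : V) : ℝ :=
  if v = p then 1 else if v = q then -1 else 0

/-- The odd resistance: the infimum of the energy over all finite-energy unit
flows from `p` to `q`. -/
noncomputable def oddRes (G : SimpleGraph V) [G.LocallyFinite] (r : V → V → ℝ)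
    (p q : V) : ℝ≥0∞ :=
  ⨅ (θ : V → V → ℝ) (_ : IsFlow G θ ∧ energy r θ ≠ ⊤ ∧ divg G θ = pointSource p q),
    energy r θ

/-- The cut resistance: the infimum of the energy over all unit flows from `p` to `q`
vanishing on every edge with an endpoint outside `S`. -/
noncomputable def cutRes (G : SimpleGraph V) [G.LocallyFinite] (r : V → V → ℝ)
    (p q : V) (S : Finset V) : ℝ≥0∞ :=
  ⨅ (θ : V → V → ℝ) (_ : IsFlow G θ ∧ divg G θ = pointSource p q ∧
      ∀ u v, (u ∉ S ∨ v ∉ S) → θ u v = 0), energy r θ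

/-- The even resistance: the infimum of the cut resistances over all finite
vertex sets containing `p` and `q`. -/
noncomputable def evenRes (G : SimpleGraph V) [G.LocallyFinite] (r : V → V → ℝ)
    (p q : V) : ℝ≥0∞ :=
  ⨅ (S : Finset V) (_ : p ∈ S ∧ q ∈ S), cutRes G r p q S

/-- The short resistance: the infimum of the energy over all antisymmetric edge
functions supported on edges with at least one endpoint in `S` whose divergence
at every vertex of `S` is that of a unit flow from `p` to `q`. -/
noncomputable def shortRes (G : SimpleGraph V) [G.LocallyFinite] (r : V → V → ℝ)
    (p q : V) (S : Finset V) : ℝ≥0∞ :=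
  ⨅ (θ : V → V → ℝ) (_ : (∀ u v, θ u v = -θ v u) ∧ (∀ u v, ¬G.Adj u v → θ u v = 0) ∧
      (∀ u v, u ∉ S → v ∉ S → θ u v = 0) ∧
      ∀ v ∈ S, divg G θ v = pointSource p q v), energy r θ

/-- A function on the vertices of a network is harmonic if the net current it
induces out of each vertex is zero. -/
def Harmonic (G : SimpleGraph V) [G.LocallyFinite] (r : V → V → ℝ) (u : V → ℝ) : Prop :=
  ∀ v, ∑ w ∈ G.neighborFinset v, (u v - u w) / r v w = 0

open Classical in
/-- The Dirichlet energy `(1/2) ∑ (u(v)-u(w))²/r(v,w)` of a function on the vertices. -/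
noncomputable def fnEnergy (G : SimpleGraph V) (r : V → V → ℝ) (u : V → ℝ) : ℝ≥0∞ :=
  2⁻¹ * ∑' p : V × V,
    if G.Adj p.1 p.2 then ENNReal.ofReal ((u p.1 - u p.2) ^ 2 / r p.1 p.2) else 0

namespace OHDaux
set_option linter.unusedSectionVars false

open scoped RealInnerProductSpace
open SimpleGraph

/-- The weight `√(r(u,v)/2)` used to embed flows into `ℓ²(V × V)`. -/
noncomputable def wgt (r : V → V → ℝ) (e : V × V) : ℝ := Real.sqrt (r e.1 e.2 / 2)

/-- The ambient Hilbert space `ℓ²(V × V)`. -/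
noncomputable abbrev LpE (V : Type*) := lp (fun _ : V × V => ℝ) 2

variable {G : SimpleGraph V} [G.LocallyFinite] {r : V → V → ℝ}

lemma wgt_symm (hr_symm : ∀ u v, r u v = r v u) (u v : V) :
    wgt r (u, v) = wgt r (v, u) := by simp [wgt, hr_symm u v]

lemma wgt_pos (hr_pos : ∀ u v, G.Adj u v → 0 < r u v) {u v : V} (h : G.Adj u v) :
    0 < wgt r (u, v) := Real.sqrt_pos.2 (by have := hr_pos u v h; simpa [wgt] using by linarith)

lemma sq_wgt (hr_pos : ∀ u v, G.Adj u v → 0 < r u v) {u v : V} (h : G.Adj u v) :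
    wgt r (u, v) ^ 2 = r u v / 2 :=
  Real.sq_sqrt (by have := hr_pos u v h; linarith)

lemma rpow_toReal_two (x : ℝ) : x ^ ((2 : ℝ≥0∞).toReal) = x ^ (2 : ℕ) := by
  rw [show ((2 : ℝ≥0∞).toReal) = ((2 : ℕ) : ℝ) by norm_num, Real.rpow_natCast]

/-- The energy of a flow in terms of the weighted square coordinates. -/
lemma energy_eq_tsum (hr_pos : ∀ u v, G.Adj u v → 0 < r u v)
    {θ : V → V → ℝ} (h0 : ∀ u v, ¬G.Adj u v → θ u v = 0) :
    energy r θ = ∑' e : V × V, ENNReal.ofReal ((wgt r e * θ e.1 e.2) ^ 2) := by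
  have hpt : ∀ e : V × V,
      r e.1 e.2 * θ e.1 e.2 ^ 2 = 2 * (wgt r e * θ e.1 e.2) ^ 2 := by
    rintro ⟨u, v⟩
    by_cases h : G.Adj u v
    · have hw : wgt r (u, v) ^ 2 = r u v / 2 := sq_wgt hr_pos h
      simp only [mul_pow]
      rw [hw]; ring
    · rw [h0 u v h]; ring
  unfold energy
  rw [tsum_congr fun e => by
    rw [hpt e, ENNReal.ofReal_mul (by norm_num : (0:ℝ) ≤ 2)]]
  rw [ENNReal.tsum_mul_left, ← mul_assoc,
    show ENNReal.ofReal 2 = 2 from by norm_num,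
    show (2⁻¹ * 2 : ℝ≥0∞) = 1 from by rw [ENNReal.inv_mul_cancel] <;> norm_num, one_mul]

/-- Finite energy gives membership in `ℓ²`. -/
lemma memℓp_flow (hr_pos : ∀ u v, G.Adj u v → 0 < r u v)
    {θ : V → V → ℝ} (h0 : ∀ u v, ¬G.Adj u v → θ u v = 0)
    (hfin : energy r θ ≠ ⊤) :
    Memℓp (fun e : V × V => wgt r e * θ e.1 e.2) 2 := by
  rw [energy_eq_tsum hr_pos h0] at hfin
  have hsum : Summable fun e : V × V => (wgt r e * θ e.1 e.2) ^ 2 := by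
    have := ENNReal.summable_toReal hfin
    refine this.congr fun e => ?_
    rw [ENNReal.toReal_ofReal (sq_nonneg _)]
  apply memℓp_gen
  refine hsum.congr fun e => ?_
  rw [rpow_toReal_two, Real.norm_eq_abs, sq_abs]

/-- Energy equals the squared norm of the associated `ℓ²` element. -/
lemma energy_eq_norm (hr_pos : ∀ u v, G.Adj u v → 0 < r u v)
    {θ : V → V → ℝ} (h0 : ∀ u v, ¬G.Adj u v → θ u v = 0)
    (g : LpE V) (hg : ∀ e : V × V, (g : ∀ _ : V × V, ℝ) e = wgt r e * θ e.1 e.2) :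
    energy r θ = ENNReal.ofReal (‖g‖ ^ 2) := by
  have hsum : Summable fun e : V × V => ‖(g : ∀ _ : V × V, ℝ) e‖ ^ ((2:ℝ≥0∞).toReal) :=
    (lp.memℓp g).summable (by norm_num)
  have hsum' : Summable fun e : V × V => ((g : ∀ _ : V × V, ℝ) e) ^ (2:ℕ) := by
    refine hsum.congr fun e => ?_
    rw [rpow_toReal_two, Real.norm_eq_abs, sq_abs]
  have hnorm : ‖g‖ ^ (2:ℕ) = ∑' e : V × V, ((g : ∀ _ : V × V, ℝ) e) ^ (2:ℕ) := by
    have h := lp.norm_rpow_eq_tsum (p := 2) (by norm_num) g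
    simp only [rpow_toReal_two] at h
    rw [h]
    exact tsum_congr fun e => by rw [Real.norm_eq_abs, sq_abs]
  rw [energy_eq_tsum hr_pos h0, hnorm,
    ENNReal.ofReal_tsum_of_nonneg (fun e => sq_nonneg _) hsum']
  exact tsum_congr fun e => by rw [hg e]

lemma summable_of_finsupp {f : V × V → ℝ} (s : Finset (V × V))
    (hs : ∀ e ∉ s, f e = 0) : Summable f :=
  summable_of_ne_finset_zero hs

lemma memℓp_of_finsupp {f : V × V → ℝ} (s : Finset (V × V))
    (hs : ∀ e ∉ s, f e = 0) : Memℓp f 2 :=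
  memℓp_gen (summable_of_ne_finset_zero (s := s) fun e he => by rw [hs e he]; simp)

lemma energy_ne_top_of_finsupp {θ : V → V → ℝ} (s : Finset (V × V))
    (hs : ∀ e ∉ s, θ e.1 e.2 = 0) : energy r θ ≠ ⊤ := by
  unfold energy
  rw [tsum_eq_sum (s := s) fun e he => by rw [hs e he]; simp]
  refine ENNReal.mul_ne_top (by norm_num) ?_
  exact (ENNReal.sum_lt_top.2 fun e _ => ENNReal.ofReal_lt_top).ne

lemma inner_eq_tsum_mul (f g : LpE V) :
    ⟪f, g⟫ = ∑' e : V × V, (f : ∀ _ : V × V, ℝ) e * (g : ∀ _ : V × V, ℝ) e := by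
  rw [lp.inner_eq_tsum]
  exact tsum_congr fun e => by simp [RCLike.inner_apply]; ring

lemma divg_add (θ η : V → V → ℝ) (v : V) :
    divg G (fun a b => θ a b + η a b) v = divg G θ v + divg G η v := by
  simp [divg, Finset.sum_add_distrib]

lemma divg_sub (θ η : V → V → ℝ) (v : V) :
    divg G (fun a b => θ a b - η a b) v = divg G θ v - divg G η v := by
  simp [divg, Finset.sum_sub_distrib]

lemma divg_smul (c : ℝ) (θ : V → V → ℝ) (v : V) :
    divg G (fun a b => c * θ a b) v = c * divg G θ v := by
  simp [divg, Finset.mul_sum]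

lemma continuous_eval (e : V × V) : Continuous fun g : LpE V => (g : ∀ _ : V × V, ℝ) e := by
  have : LipschitzWith 1 fun g : LpE V => (g : ∀ _ : V × V, ℝ) e := by
    refine LipschitzWith.of_dist_le_mul fun f g => ?_
    rw [NNReal.coe_one, one_mul, dist_eq_norm, dist_eq_norm]
    have h1 : (f : ∀ _ : V × V, ℝ) e - (g : ∀ _ : V × V, ℝ) e = ((f - g : LpE V) : ∀ _ : V × V, ℝ) e := by
      rw [lp.coeFn_sub]; rfl
    calc ‖(f : ∀ _ : V × V, ℝ) e - (g : ∀ _ : V × V, ℝ) e‖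
        = ‖((f - g : LpE V) : ∀ _ : V × V, ℝ) e‖ := by rw [h1]
      _ ≤ ‖f - g‖ := lp.norm_apply_le_norm (by norm_num) (f - g) e
  exact this.continuous

open Classical in
/-- The unit flow along a single oriented edge. -/
noncomputable def edgeFlow (u v : V) : V → V → ℝ := fun x y =>
  (if x = u ∧ y = v then 1 else 0) - (if x = v ∧ y = u then 1 else 0)

variable (r) in
/-- The unit flow along a walk. -/
noncomputable def walkFlow {a b : V} (W : G.Walk a b) : V → V → ℝ :=
  (W.darts.map fun d => edgeFlow d.toProd.1 d.toProd.2).sum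

variable (r) in
/-- The sum of `r·ψ` along a walk. -/
noncomputable def walkSum (ψ : V → V → ℝ) {a b : V} (W : G.Walk a b) : ℝ :=
  (W.darts.map fun d => r d.toProd.1 d.toProd.2 * ψ d.toProd.1 d.toProd.2).sum

lemma walkFlow_nil {a : V} : walkFlow (SimpleGraph.Walk.nil (G := G) (u := a)) = 0 := rfl

lemma walkFlow_cons {a b c : V} (h : G.Adj a b) (W : G.Walk b c) :
    walkFlow (SimpleGraph.Walk.cons h W) = edgeFlow a b + walkFlow W := by
  simp [walkFlow, SimpleGraph.Walk.darts_cons]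

lemma walkSum_nil {ψ : V → V → ℝ} {a : V} :
    walkSum r ψ (SimpleGraph.Walk.nil (G := G) (u := a)) = 0 := rfl

lemma walkSum_cons {ψ : V → V → ℝ} {a b c : V} (h : G.Adj a b) (W : G.Walk b c) :
    walkSum r ψ (SimpleGraph.Walk.cons h W) = r a b * ψ a b + walkSum r ψ W := by
  simp [walkSum, SimpleGraph.Walk.darts_cons]

lemma walkSum_append {ψ : V → V → ℝ} {a b c : V} (W : G.Walk a b) (W' : G.Walk b c) :
    walkSum r ψ (W.append W') = walkSum r ψ W + walkSum r ψ W' := by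
  simp [walkSum, SimpleGraph.Walk.darts_append]

lemma walkSum_reverse (hr_symm : ∀ u v, r u v = r v u) {ψ : V → V → ℝ}
    (hψ : ∀ u v, ψ u v = -ψ v u) {a b : V} (W : G.Walk a b) :
    walkSum r ψ W.reverse = - walkSum r ψ W := by
  rw [walkSum, SimpleGraph.Walk.darts_reverse, List.map_reverse, List.sum_reverse,
    List.map_map, walkSum]
  induction W.darts with
  | nil => simp
  | cons d l ih =>
      simp only [List.map_cons, List.sum_cons, ih, Function.comp_apply]
      have : r d.symm.toProd.1 d.symm.toProd.2 * ψ d.symm.toProd.1 d.symm.toProd.2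
          = -(r d.toProd.1 d.toProd.2 * ψ d.toProd.1 d.toProd.2) := by
        rcases d with ⟨⟨x, y⟩, hxy⟩
        simp only [SimpleGraph.Dart.symm, Prod.swap_prod_mk]
        show r y x * ψ y x = -(r x y * ψ x y)
        rw [hψ y x, hr_symm y x]; ring
      rw [this]; ring

open Classical in
lemma edgeFlow_antisymm (u v x y : V) : edgeFlow u v x y = - edgeFlow u v y x := by
  unfold edgeFlow
  have e1 : (if x = u ∧ y = v then (1:ℝ) else 0) = (if y = v ∧ x = u then (1:ℝ) else 0) := by
    by_cases h : x = u ∧ y = v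
    · rw [if_pos h, if_pos (and_comm.mp h)]
    · rw [if_neg h, if_neg fun hc => h (and_comm.mp hc)]
  have e2 : (if x = v ∧ y = u then (1:ℝ) else 0) = (if y = u ∧ x = v then (1:ℝ) else 0) := by
    by_cases h : x = v ∧ y = u
    · rw [if_pos h, if_pos (and_comm.mp h)]
    · rw [if_neg h, if_neg fun hc => h (and_comm.mp hc)]
  rw [e1, e2]
  ring

lemma walkFlow_antisymm {a b : V} (W : G.Walk a b) (x y : V) :
    walkFlow W x y = - walkFlow W y x := by
  induction W with
  | nil => simp [walkFlow_nil]
  | cons h p ih =>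
      simp only [walkFlow_cons, Pi.add_apply, ih, edgeFlow_antisymm _ _ x y]
      ring

lemma edgeFlow_eq_zero_of_ne {u v x y : V} (h1 : (x, y) ≠ (u, v)) (h2 : (x, y) ≠ (v, u)) :
    edgeFlow u v x y = 0 := by
  unfold edgeFlow
  rw [if_neg, if_neg, sub_zero]
  · rintro ⟨rfl, rfl⟩; exact h2 rfl
  · rintro ⟨rfl, rfl⟩; exact h1 rfl

lemma walkFlow_nonadj {a b : V} (W : G.Walk a b) {x y : V} (h : ¬G.Adj x y) :
    walkFlow W x y = 0 := by
  induction W with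
  | nil => simp [walkFlow_nil]
  | cons hadj p ih =>
      rename_i u c _
      simp only [walkFlow_cons, Pi.add_apply, ih, add_zero]
      refine edgeFlow_eq_zero_of_ne ?_ ?_
      · rintro hxy; rw [Prod.mk.injEq] at hxy; obtain ⟨rfl, rfl⟩ := hxy; exact h hadj
      · rintro hxy; rw [Prod.mk.injEq] at hxy; obtain ⟨rfl, rfl⟩ := hxy; exact h hadj.symm

open Classical in
/-- The support of a walk flow. -/
noncomputable def walkSupp {a b : V} (W : G.Walk a b) : Finset (V × V) :=
  (W.darts.map fun d => d.toProd).toFinset ∪ (W.darts.map fun d => d.toProd.swap).toFinset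

lemma walkFlow_supp {a b : V} (W : G.Walk a b) {e : V × V} (he : e ∉ walkSupp W) :
    walkFlow W e.1 e.2 = 0 := by
  induction W with
  | nil => simp [walkFlow_nil]
  | cons hadj p ih =>
      rename_i u c _
      simp only [walkSupp, SimpleGraph.Walk.darts_cons, List.map_cons, List.toFinset_cons,
        Finset.mem_union, Finset.mem_insert, not_or] at he
      obtain ⟨⟨he1, he2⟩, he3, he4⟩ := he
      simp only [walkFlow_cons, Pi.add_apply]
      rw [ih (by simp only [walkSupp, Finset.mem_union, not_or]; exact ⟨he2, he4⟩)]
      rw [edgeFlow_eq_zero_of_ne (by simpa using he1) (by simpa [Prod.swap] using he3), add_zero]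

open Classical in
lemma divg_edgeFlow {u v : V} (h : G.Adj u v) (x : V) :
    divg G (edgeFlow u v) x = (if x = u then 1 else 0) - (if x = v then 1 else 0) := by
  have huv : u ≠ v := h.ne
  unfold divg edgeFlow
  rw [Finset.sum_sub_distrib]
  congr 1
  · by_cases hx : x = u
    · subst hx
      rw [if_pos rfl]
      have : ∀ y ∈ G.neighborFinset x, (if x = x ∧ y = v then (1:ℝ) else 0)
          = if y = v then 1 else 0 := fun y _ => by simp
      rw [Finset.sum_congr rfl this, Finset.sum_ite_eq' (G.neighborFinset x) v fun _ => (1:ℝ)]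
      rw [if_pos (by rwa [SimpleGraph.mem_neighborFinset])]
    · rw [if_neg hx]
      refine Finset.sum_eq_zero fun y _ => ?_
      rw [if_neg (by tauto)]
  · by_cases hx : x = v
    · subst hx
      rw [if_pos rfl]
      have : ∀ y ∈ G.neighborFinset x, (if x = x ∧ y = u then (1:ℝ) else 0)
          = if y = u then 1 else 0 := fun y _ => by simp
      rw [Finset.sum_congr rfl this, Finset.sum_ite_eq' (G.neighborFinset x) u fun _ => (1:ℝ)]
      rw [if_pos (by rw [SimpleGraph.mem_neighborFinset]; exact h.symm)]
    · rw [if_neg hx]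
      refine Finset.sum_eq_zero fun y _ => ?_
      rw [if_neg (by tauto)]

open Classical in
lemma divg_walkFlow {a b : V} (W : G.Walk a b) (x : V) :
    divg G (walkFlow W) x = (if x = a then 1 else 0) - (if x = b then 1 else 0) := by
  induction W with
  | nil => simp [walkFlow_nil, divg]
  | cons hadj p ih =>
      rename_i u c d
      rw [walkFlow_cons]
      have : divg G (edgeFlow u c + walkFlow p) x
          = divg G (edgeFlow u c) x + divg G (walkFlow p) x := by
        simpa [divg] using Finset.sum_add_distrib
      rw [this, divg_edgeFlow hadj, ih]
      ring

lemma pair_walk_summable {ψ : V → V → ℝ} {a b : V} (W : G.Walk a b) :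
    Summable fun e : V × V => r e.1 e.2 / 2 * ψ e.1 e.2 * walkFlow W e.1 e.2 :=
  summable_of_finsupp (walkSupp W) fun e he => by rw [walkFlow_supp W he, mul_zero]

lemma pair_walk (hr_symm : ∀ u v, r u v = r v u) {ψ : V → V → ℝ}
    (hψ : ∀ u v, ψ u v = -ψ v u) {a b : V} (W : G.Walk a b) :
    ∑' e : V × V, r e.1 e.2 / 2 * ψ e.1 e.2 * walkFlow W e.1 e.2 = walkSum r ψ W := by
  classical
  induction W with
  | nil => simp [walkFlow_nil, walkSum, SimpleGraph.Walk.darts_nil]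
  | cons hadj p ih =>
      rename_i u c d
      have hsplit : ∀ e : V × V,
          r e.1 e.2 / 2 * ψ e.1 e.2 * walkFlow (SimpleGraph.Walk.cons hadj p) e.1 e.2
          = r e.1 e.2 / 2 * ψ e.1 e.2 * edgeFlow u c e.1 e.2
            + r e.1 e.2 / 2 * ψ e.1 e.2 * walkFlow p e.1 e.2 := by
        intro e; rw [walkFlow_cons]; simp [mul_add]
      rw [tsum_congr hsplit, Summable.tsum_add ?_ (pair_walk_summable p)]
      · rw [ih, walkSum_cons]
        congr 1
        have huc : u ≠ c := hadj.ne
        have hne : ((u, c) : V × V) ≠ (c, u) := fun hh => huc (congrArg Prod.fst hh)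
        rw [tsum_eq_sum (s := {((u, c) : V × V), (c, u)})
          (fun e he => by
            obtain ⟨x, y⟩ := e
            simp only [Finset.mem_insert, Finset.mem_singleton, not_or] at he
            rw [edgeFlow_eq_zero_of_ne he.1 he.2, mul_zero])]
        rw [Finset.sum_pair hne]
        have e1 : edgeFlow u c u c = 1 := by
          unfold edgeFlow
          rw [if_pos ⟨rfl, rfl⟩, if_neg fun hh => huc hh.1, sub_zero]
        have e2 : edgeFlow u c c u = -1 := by
          unfold edgeFlow
          rw [if_neg fun hh => huc hh.2, if_pos ⟨rfl, rfl⟩, zero_sub]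
        simp only [e1, e2]
        rw [hψ c u, hr_symm c u]
        ring
      · exact summable_of_finsupp {((u, c) : V × V), (c, u)} fun e he => by
          obtain ⟨x, y⟩ := e
          simp only [Finset.mem_insert, Finset.mem_singleton, not_or] at he
          rw [edgeFlow_eq_zero_of_ne he.1 he.2, mul_zero]

/-- Pairing of a weighted `ℓ²` element with a weighted walk flow is the walk sum. -/
lemma inner_walk (hr_pos : ∀ u v, G.Adj u v → 0 < r u v) (hr_symm : ∀ u v, r u v = r v u)
    {ψ : V → V → ℝ} (hψ : ∀ u v, ψ u v = -ψ v u)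
    (χ : LpE V) (hχ : ∀ e : V × V, (χ : ∀ _ : V × V, ℝ) e = wgt r e * ψ e.1 e.2)
    {a b : V} (W : G.Walk a b) (g : LpE V)
    (hg : ∀ e : V × V, (g : ∀ _ : V × V, ℝ) e = wgt r e * walkFlow W e.1 e.2) :
    ⟪χ, g⟫ = walkSum r ψ W := by
  rw [inner_eq_tsum_mul, ← pair_walk hr_symm hψ W]
  refine tsum_congr fun e => ?_
  rw [hχ e, hg e]
  by_cases h : G.Adj e.1 e.2
  · have : wgt r e * ψ e.1 e.2 * (wgt r e * walkFlow W e.1 e.2)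
        = wgt r e ^ 2 * ψ e.1 e.2 * walkFlow W e.1 e.2 := by ring
    rw [this, show wgt r e = wgt r (e.1, e.2) from rfl, sq_wgt hr_pos h]
  · rw [walkFlow_nonadj W h]
    ring

variable (G r) in
open Classical in
/-- The space of finite-energy sourceless flows, in weighted `ℓ²` coordinates. -/
noncomputable def srcFree : Submodule ℝ (LpE V) where
  carrier := {g | (∀ u v : V, (g : ∀ _ : V × V, ℝ) (u, v) = - (g : ∀ _ : V × V, ℝ) (v, u)) ∧
      (∀ u v : V, ¬ G.Adj u v → (g : ∀ _ : V × V, ℝ) (u, v) = 0) ∧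
      ∀ v : V, ∑ u ∈ G.neighborFinset v, (g : ∀ _ : V × V, ℝ) (v, u) * (wgt r (v, u))⁻¹ = 0}
  add_mem' := by
    rintro a b ⟨ha1, ha2, ha3⟩ ⟨hb1, hb2, hb3⟩
    refine ⟨fun u v => ?_, fun u v h => ?_, fun v => ?_⟩ <;>
      simp only [lp.coeFn_add, Pi.add_apply]
    · rw [ha1 u v, hb1 u v]; ring
    · rw [ha2 u v h, hb2 u v h]; ring
    · rw [show ∑ u ∈ G.neighborFinset v,
          ((a : ∀ _ : V × V, ℝ) (v, u) + (b : ∀ _ : V × V, ℝ) (v, u)) * (wgt r (v, u))⁻¹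
          = ∑ u ∈ G.neighborFinset v, ((a : ∀ _ : V × V, ℝ) (v, u) * (wgt r (v, u))⁻¹
            + (b : ∀ _ : V × V, ℝ) (v, u) * (wgt r (v, u))⁻¹) from
        Finset.sum_congr rfl fun u _ => by ring]
      rw [Finset.sum_add_distrib, ha3 v, hb3 v, add_zero]
  zero_mem' := by
    refine ⟨fun u v => ?_, fun u v h => ?_, fun v => ?_⟩ <;>
      simp [lp.coeFn_zero]
  smul_mem' := by
    rintro c a ⟨ha1, ha2, ha3⟩
    refine ⟨fun u v => ?_, fun u v h => ?_, fun v => ?_⟩ <;>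
      simp only [lp.coeFn_smul, Pi.smul_apply, smul_eq_mul]
    · rw [ha1 u v]; ring
    · rw [ha2 u v h]; ring
    · rw [show ∑ u ∈ G.neighborFinset v,
          c * (a : ∀ _ : V × V, ℝ) (v, u) * (wgt r (v, u))⁻¹
          = c * ∑ u ∈ G.neighborFinset v, (a : ∀ _ : V × V, ℝ) (v, u) * (wgt r (v, u))⁻¹ from by
        rw [Finset.mul_sum]; exact Finset.sum_congr rfl fun u _ => by ring]
      rw [ha3 v, mul_zero]

variable (G r) in
open Classical in
/-- The space of finitely supported sourceless flows, in weighted `ℓ²` coordinates. -/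
noncomputable def finFlows : Submodule ℝ (LpE V) where
  carrier := {g | (∀ u v : V, (g : ∀ _ : V × V, ℝ) (u, v) = - (g : ∀ _ : V × V, ℝ) (v, u)) ∧
      (∀ u v : V, ¬ G.Adj u v → (g : ∀ _ : V × V, ℝ) (u, v) = 0) ∧
      {e : V × V | (g : ∀ _ : V × V, ℝ) e ≠ 0}.Finite ∧
      ∀ v : V, ∑ u ∈ G.neighborFinset v, (g : ∀ _ : V × V, ℝ) (v, u) * (wgt r (v, u))⁻¹ = 0}
  add_mem' := by
    rintro a b ⟨ha1, ha2, haf, ha3⟩ ⟨hb1, hb2, hbf, hb3⟩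
    have hmem : (a + b : LpE V) ∈ srcFree G r :=
      (srcFree G r).add_mem ⟨ha1, ha2, ha3⟩ ⟨hb1, hb2, hb3⟩
    obtain ⟨h1, h2, h3⟩ := hmem
    refine ⟨h1, h2, ?_, h3⟩
    refine Set.Finite.subset (haf.union hbf) fun e he => ?_
    simp only [Set.mem_setOf_eq, lp.coeFn_add, Pi.add_apply] at he
    by_contra hc
    simp only [Set.mem_union, Set.mem_setOf_eq, not_or, not_not] at hc
    rw [hc.1, hc.2, add_zero] at he
    exact he rfl
  zero_mem' := by
    refine ⟨fun u v => by simp [lp.coeFn_zero], fun u v h => by simp [lp.coeFn_zero], ?_, fun v => by simp [lp.coeFn_zero]⟩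
    convert Set.finite_empty
    ext e
    simp [lp.coeFn_zero]
  smul_mem' := by
    rintro c a ⟨ha1, ha2, haf, ha3⟩
    have hmem : (c • a : LpE V) ∈ srcFree G r := (srcFree G r).smul_mem c ⟨ha1, ha2, ha3⟩
    obtain ⟨h1, h2, h3⟩ := hmem
    refine ⟨h1, h2, ?_, h3⟩
    refine Set.Finite.subset haf fun e he => ?_
    simp only [Set.mem_setOf_eq, lp.coeFn_smul, Pi.smul_apply, smul_eq_mul] at he
    simp only [Set.mem_setOf_eq]
    intro hc
    rw [hc, mul_zero] at he
    exact he rfl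

lemma finFlows_le_srcFree : finFlows G r ≤ srcFree G r := by
  rintro g ⟨h1, h2, _, h3⟩; exact ⟨h1, h2, h3⟩

lemma srcFree_isClosed : IsClosed (srcFree G r : Set (LpE V)) := by
  have h1 : IsClosed (⋂ (u : V) (v : V),
      {g : LpE V | (g : ∀ _ : V × V, ℝ) (u, v) + (g : ∀ _ : V × V, ℝ) (v, u) = 0}) := by
    refine isClosed_iInter fun u => isClosed_iInter fun v => ?_
    exact isClosed_eq ((continuous_eval (u, v)).add (continuous_eval (v, u))) continuous_const
  have h2 : IsClosed (⋂ (u : V) (v : V) (_ : ¬ G.Adj u v),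
      {g : LpE V | (g : ∀ _ : V × V, ℝ) (u, v) = 0}) := by
    refine isClosed_iInter fun u => isClosed_iInter fun v => isClosed_iInter fun _ => ?_
    exact isClosed_eq (continuous_eval (u, v)) continuous_const
  have h3 : IsClosed (⋂ (v : V),
      {g : LpE V | ∑ u ∈ G.neighborFinset v, (g : ∀ _ : V × V, ℝ) (v, u) * (wgt r (v, u))⁻¹ = 0}) := by
    refine isClosed_iInter fun v => ?_
    refine isClosed_eq ?_ continuous_const
    exact continuous_finset_sum _ fun u _ => (continuous_eval (v, u)).mul continuous_const
  have heq : (srcFree G r : Set (LpE V)) =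
      (⋂ (u : V) (v : V),
        {g : LpE V | (g : ∀ _ : V × V, ℝ) (u, v) + (g : ∀ _ : V × V, ℝ) (v, u) = 0}) ∩
      ((⋂ (u : V) (v : V) (_ : ¬ G.Adj u v),
        {g : LpE V | (g : ∀ _ : V × V, ℝ) (u, v) = 0}) ∩
      (⋂ (v : V),
        {g : LpE V | ∑ u ∈ G.neighborFinset v, (g : ∀ _ : V × V, ℝ) (v, u) * (wgt r (v, u))⁻¹ = 0})) := by
    ext g
    simp only [Set.mem_inter_iff, Set.mem_iInter, Set.mem_setOf_eq, SetLike.mem_coe]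
    constructor
    · rintro ⟨hg1, hg2, hg3⟩
      exact ⟨fun u v => by rw [hg1 u v]; ring, ⟨fun u v h => hg2 u v h, hg3⟩⟩
    · rintro ⟨hg1, hg2, hg3⟩
      exact ⟨fun u v => by have := hg1 u v; linarith, hg2, hg3⟩
  rw [heq]
  exact h1.inter (h2.inter h3)

lemma walkSum_welldef (hr_symm : ∀ u v, r u v = r v u) {ψ : V → V → ℝ}
    (hψ : ∀ u v, ψ u v = -ψ v u)
    (horth : ∀ (c : V) (W : G.Walk c c), walkSum r ψ W = 0)
    {x y : V} (W W' : G.Walk x y) : walkSum r ψ W = walkSum r ψ W' := by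
  have h := horth x (W.append W'.reverse)
  rw [walkSum_append, walkSum_reverse hr_symm hψ] at h
  linarith

lemma exists_potential (hG : G.Connected) (hr_symm : ∀ u v, r u v = r v u)
    {ψ : V → V → ℝ} (hψ : ∀ u v, ψ u v = -ψ v u)
    (horth : ∀ (c : V) (W : G.Walk c c), walkSum r ψ W = 0) :
    ∃ F : V → ℝ, ∀ u v, G.Adj u v → F v - F u = r u v * ψ u v := by
  haveI := hG.nonempty
  set b := Classical.arbitrary V with hb
  refine ⟨fun v => walkSum r ψ ((hG.preconnected b v).some), fun u v h => ?_⟩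
  have key : walkSum r ψ ((hG.preconnected b v).some)
      = walkSum r ψ (((hG.preconnected b u).some).append
          (SimpleGraph.Walk.cons h SimpleGraph.Walk.nil)) :=
    walkSum_welldef hr_symm hψ horth _ _
  have hnil : walkSum r ψ (SimpleGraph.Walk.nil (G := G) (u := v)) = 0 := rfl
  show walkSum r ψ ((hG.preconnected b v).some) - walkSum r ψ ((hG.preconnected b u).some)
      = r u v * ψ u v
  rw [key, walkSum_append, walkSum_cons, hnil]
  ring

/-- **Density lemma**: if every finite-energy harmonic function is constant, then the
finitely supported sourceless flows are dense in the finite-energy sourceless flows. -/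
lemma srcFree_le_closure (hG : G.Connected)
    (hr_pos : ∀ u v, G.Adj u v → 0 < r u v) (hr_symm : ∀ u v, r u v = r v u)
    (hH : ∀ u : V → ℝ, Harmonic G r u → fnEnergy G r u ≠ ⊤ → ∀ v w, u v = u w) :
    srcFree G r ≤ (finFlows G r).topologicalClosure := by
  intro x hx
  by_contra hxc
  classical
  set K1 := (finFlows G r).topologicalClosure with hK1
  haveI : CompleteSpace K1 := (finFlows G r).isClosed_topologicalClosure.completeSpace_coe
  set χ : LpE V := x - (Submodule.orthogonalProjection K1 x : LpE V) with hχdef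
  have hPK : ((Submodule.orthogonalProjection K1 x : K1) : LpE V) ∈ K1 := (Submodule.orthogonalProjection K1 x).2
  have hχne : χ ≠ 0 := by
    intro h0
    apply hxc
    have hxeq : x = ((Submodule.orthogonalProjection K1 x : K1) : LpE V) := by
      rw [hχdef] at h0; rwa [sub_eq_zero] at h0
    rw [hxeq]; exact hPK
  have hχK2 : χ ∈ srcFree G r := by
    refine Submodule.sub_mem _ hx ?_
    exact (Submodule.topologicalClosure_minimal _ finFlows_le_srcFree srcFree_isClosed) hPK
  obtain ⟨hχ1, hχ2, hχ3⟩ := hχK2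
  have horthall : ∀ g ∈ finFlows G r, ⟪χ, g⟫ = 0 := fun g hg =>
    Submodule.starProjection_inner_eq_zero x g (Submodule.le_topologicalClosure _ hg)
  set ψ : V → V → ℝ :=
    fun u v => if G.Adj u v then (χ : ∀ _ : V × V, ℝ) (u, v) / wgt r (u, v) else 0 with hψdef
  have hψnonadj : ∀ u v, ¬G.Adj u v → ψ u v = 0 := fun u v h => by
    simp only [hψdef, if_neg h]
  have hψanti : ∀ u v, ψ u v = -ψ v u := by
    intro u v
    by_cases h : G.Adj u v
    · simp only [hψdef, if_pos h, if_pos h.symm]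
      rw [hχ1 u v, wgt_symm hr_symm u v]; ring
    · simp only [hψdef, if_neg h, if_neg (fun hs : G.Adj v u => h hs.symm)]; ring
  have hχcoord : ∀ e : V × V, (χ : ∀ _ : V × V, ℝ) e = wgt r e * ψ e.1 e.2 := by
    rintro ⟨u, v⟩
    by_cases h : G.Adj u v
    · simp only [hψdef, if_pos h]
      rw [mul_div_cancel₀ _ (ne_of_gt (wgt_pos hr_pos h))]
    · simp only [hψdef, if_neg h]
      rw [hχ2 u v h, mul_zero]
  have horthwalk : ∀ (c : V) (W : G.Walk c c), walkSum r ψ W = 0 := by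
    intro c W
    set f : (V × V) → ℝ := fun e => wgt r e * walkFlow W e.1 e.2 with hfdef
    have hf0 : ∀ e ∉ walkSupp W, f e = 0 := fun e he => by
      simp only [hfdef]; rw [walkFlow_supp W he, mul_zero]
    have hmem : Memℓp f 2 := memℓp_of_finsupp (walkSupp W) hf0
    set g : LpE V := ⟨f, hmem⟩ with hgdef
    have hg : ∀ e : V × V, (g : ∀ _ : V × V, ℝ) e = wgt r e * walkFlow W e.1 e.2 := fun e => rfl
    have hgmem : g ∈ finFlows G r := by
      refine ⟨fun u v => ?_, fun u v h => ?_, ?_, fun v => ?_⟩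
      · rw [hg, hg]
        show wgt r (u, v) * walkFlow W u v = -(wgt r (v, u) * walkFlow W v u)
        rw [wgt_symm hr_symm u v, walkFlow_antisymm W u v]; ring
      · rw [hg]
        show wgt r (u, v) * walkFlow W u v = 0
        rw [walkFlow_nonadj W h, mul_zero]
      · refine Set.Finite.subset (walkSupp W).finite_toSet fun e he => ?_
        simp only [Set.mem_setOf_eq] at he
        by_contra hc
        exact he (hf0 e (by simpa using hc))
      · have hterm : ∀ u ∈ G.neighborFinset v,
            (g : ∀ _ : V × V, ℝ) (v, u) * (wgt r (v, u))⁻¹ = walkFlow W v u := by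
          intro u hu
          have hadj : G.Adj v u := by rwa [SimpleGraph.mem_neighborFinset] at hu
          rw [hg]
          show wgt r (v, u) * walkFlow W v u * (wgt r (v, u))⁻¹ = walkFlow W v u
          rw [mul_comm (wgt r (v, u)) (walkFlow W v u), mul_assoc,
            mul_inv_cancel₀ (ne_of_gt (wgt_pos hr_pos hadj)), mul_one]
        rw [Finset.sum_congr rfl hterm,
          show ∑ u ∈ G.neighborFinset v, walkFlow W v u = divg G (walkFlow W) v from rfl,
          divg_walkFlow W v, sub_self]
    have h0 := horthall g hgmem
    rwa [inner_walk hr_pos hr_symm hψanti χ hχcoord W g hg] at h0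
  obtain ⟨F, hF⟩ := exists_potential hG hr_symm hψanti horthwalk
  have hdiv : ∀ v, divg G ψ v = 0 := by
    intro v
    have hterm : ∀ u ∈ G.neighborFinset v,
        ψ v u = (χ : ∀ _ : V × V, ℝ) (v, u) * (wgt r (v, u))⁻¹ := by
      intro u hu
      have hadj : G.Adj v u := by rwa [SimpleGraph.mem_neighborFinset] at hu
      simp only [hψdef, if_pos hadj, div_eq_mul_inv]
    rw [divg, Finset.sum_congr rfl hterm, hχ3 v]
  have hFharm : Harmonic G r F := by
    intro v
    have hterm : ∀ w ∈ G.neighborFinset v, (F v - F w) / r v w = -ψ v w := by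
      intro w hw
      have hadj : G.Adj v w := by rwa [SimpleGraph.mem_neighborFinset] at hw
      have hgrad := hF v w hadj
      have hr0 : r v w ≠ 0 := ne_of_gt (hr_pos v w hadj)
      rw [show F v - F w = -(r v w * ψ v w) by linarith, neg_div,
        mul_div_cancel_left₀ _ hr0]
    rw [Finset.sum_congr rfl hterm, Finset.sum_neg_distrib,
      show ∑ w ∈ G.neighborFinset v, ψ v w = divg G ψ v from rfl, hdiv v, neg_zero]
  have hFfin : fnEnergy G r F ≠ ⊤ := by
    have heq : fnEnergy G r F = energy r ψ := by
      unfold fnEnergy energy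
      congr 1
      refine tsum_congr fun e => ?_
      by_cases h : G.Adj e.1 e.2
      · rw [if_pos h]
        congr 1
        have hgrad := hF e.1 e.2 h
        have hr0 : r e.1 e.2 ≠ 0 := ne_of_gt (hr_pos e.1 e.2 h)
        rw [show F e.1 - F e.2 = -(r e.1 e.2 * ψ e.1 e.2) by linarith]
        first
        | (field_simp; ring)
        | field_simp
      · rw [if_neg h, hψnonadj e.1 e.2 h]
        simp
    rw [heq, energy_eq_norm hr_pos hψnonadj χ hχcoord]
    exact ENNReal.ofReal_ne_top
  have hexu : ∃ u v, G.Adj u v ∧ ψ u v ≠ 0 := by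
    by_contra hc
    push_neg at hc
    apply hχne
    refine lp.ext (funext fun e => ?_)
    rw [hχcoord e, lp.coeFn_zero, Pi.zero_apply]
    by_cases h : G.Adj e.1 e.2
    · rw [hc e.1 e.2 h, mul_zero]
    · rw [hψnonadj e.1 e.2 h, mul_zero]
  obtain ⟨u, v, hadj, hne⟩ := hexu
  have hconst := hH F hFharm hFfin v u
  have hgrad := hF u v hadj
  have : r u v * ψ u v = 0 := by rw [← hgrad, hconst, sub_self]
  rcases mul_eq_zero.mp this with h | h
  · exact (ne_of_gt (hr_pos u v hadj)) h
  · exact hne h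

open Classical in
lemma divg_walkFlow_eq {p q : V} (hpq : p ≠ q) (W : G.Walk p q) :
    divg G (walkFlow W) = pointSource p q := by
  funext x
  rw [divg_walkFlow W x]
  unfold pointSource
  by_cases h1 : x = p
  · subst h1
    simp [hpq]
  · by_cases h2 : x = q <;> simp [h1, h2, Ne.symm hpq]

lemma const_of_const_on_edges {F : V → ℝ} (hconst : ∀ a b, G.Adj a b → F a = F b)
    {x y : V} (W : G.Walk x y) : F x = F y := by
  induction W with
  | nil => rfl
  | cons hadj _ ih => exact (hconst _ _ hadj).trans ih

/-- Summation by parts: pairing a finitely supported unit flow against a gradient flow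
gives the potential difference. -/
lemma sum_by_parts {p q : V} (hpq : p ≠ q)
    {θ0 : V → V → ℝ} (hfl : IsFlow G θ0) (hdiv : divg G θ0 = pointSource p q)
    (s : Finset (V × V)) (hs : ∀ e ∉ s, θ0 e.1 e.2 = 0)
    (F : V → ℝ) {ψ : V → V → ℝ}
    (hψgrad : ∀ x y, G.Adj x y → r x y * ψ x y = F x - F y)
    (hψnonadj : ∀ x y, ¬G.Adj x y → ψ x y = 0) :
    ∑' e : V × V, r e.1 e.2 / 2 * θ0 e.1 e.2 * ψ e.1 e.2 = F p - F q := by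
  classical
  set T : Finset V := s.image Prod.fst ∪ s.image Prod.snd ∪ {p, q} with hT
  have hpT : p ∈ T := Finset.mem_union_right _ (Finset.mem_insert_self _ _)
  have hqT : q ∈ T := Finset.mem_union_right _ (Finset.mem_insert_of_mem (Finset.mem_singleton_self _))
  have hsT : ∀ e : V × V, θ0 e.1 e.2 ≠ 0 → e.1 ∈ T ∧ e.2 ∈ T := by
    intro e he
    have hes : e ∈ s := by by_contra hc; exact he (hs e hc)
    constructor
    · exact Finset.mem_union_left _ (Finset.mem_union_left _ (Finset.mem_image_of_mem _ hes))
    · exact Finset.mem_union_left _ (Finset.mem_union_right _ (Finset.mem_image_of_mem _ hes))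
  have hrow : ∀ x, ∑ y ∈ T, θ0 x y = divg G θ0 x := by
    intro x
    have h1 : ∑ y ∈ T ∪ G.neighborFinset x, θ0 x y = ∑ y ∈ T, θ0 x y := by
      refine (Finset.sum_subset Finset.subset_union_left fun y _ hy => ?_).symm
      by_contra hc
      exact hy (hsT (x, y) hc).2
    have h2 : ∑ y ∈ T ∪ G.neighborFinset x, θ0 x y = divg G θ0 x := by
      refine (Finset.sum_subset Finset.subset_union_right fun y _ hy => ?_).symm
      refine hfl.2 x y fun hadj => hy ?_
      rwa [SimpleGraph.mem_neighborFinset]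
    rw [← h1, h2]
  have hcol : ∀ y, ∑ x ∈ T, θ0 x y = - divg G θ0 y := by
    intro y
    rw [show ∑ x ∈ T, θ0 x y = ∑ x ∈ T, -θ0 y x from
      Finset.sum_congr rfl fun x _ => by rw [hfl.1 x y],
      Finset.sum_neg_distrib, hrow y]
  have hterm : ∀ e : V × V, r e.1 e.2 / 2 * θ0 e.1 e.2 * ψ e.1 e.2
      = 1 / 2 * θ0 e.1 e.2 * (F e.1 - F e.2) := by
    intro e
    by_cases h : G.Adj e.1 e.2
    · rw [← hψgrad e.1 e.2 h]; ring
    · rw [hψnonadj e.1 e.2 h, hfl.2 e.1 e.2 h]; ring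
  rw [tsum_congr hterm]
  rw [tsum_eq_sum (s := T ×ˢ T) (f := fun e : V × V => 1 / 2 * θ0 e.1 e.2 * (F e.1 - F e.2))
    (fun e he => by
      have h0 : θ0 e.1 e.2 = 0 := by
        by_contra hc
        obtain ⟨h1, h2⟩ := hsT e hc
        exact he (Finset.mem_product.mpr ⟨h1, h2⟩)
      show 1 / 2 * θ0 e.1 e.2 * (F e.1 - F e.2) = 0
      rw [h0]; ring)]
  rw [Finset.sum_product]
  have hS : ∑ x ∈ T, F x * pointSource p q x = F p - F q := by
    have hsub : ({p, q} : Finset V) ⊆ T := by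
      intro x hx
      rcases Finset.mem_insert.mp hx with h | h
      · rwa [h]
      · rw [Finset.mem_singleton.mp h]; exact hqT
    rw [← Finset.sum_subset hsub fun x _ hx => ?_]
    · rw [Finset.sum_pair hpq]
      unfold pointSource
      rw [if_pos rfl, if_neg (Ne.symm hpq), if_pos rfl]
      ring
    · have hxp : x ≠ p := fun hc => hx (by rw [hc]; exact Finset.mem_insert_self _ _)
      have hxq : x ≠ q := fun hc => hx (by rw [hc]; exact Finset.mem_insert_of_mem (Finset.mem_singleton_self _))
      unfold pointSource
      rw [if_neg hxp, if_neg hxq, mul_zero]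
  have hsplit : ∀ x ∈ T, ∑ y ∈ T, 1 / 2 * θ0 x y * (F x - F y)
      = 1 / 2 * F x * divg G θ0 x - ∑ y ∈ T, 1 / 2 * F y * θ0 x y := by
    intro x _
    rw [show (∑ y ∈ T, 1 / 2 * θ0 x y * (F x - F y))
        = ∑ y ∈ T, (1 / 2 * F x * θ0 x y - 1 / 2 * F y * θ0 x y) from
      Finset.sum_congr rfl fun y _ => by ring]
    rw [Finset.sum_sub_distrib]
    congr 1
    rw [show (∑ y ∈ T, 1 / 2 * F x * θ0 x y) = 1 / 2 * F x * ∑ y ∈ T, θ0 x y from by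
      rw [Finset.mul_sum]]
    rw [hrow x]
  rw [Finset.sum_congr rfl hsplit, Finset.sum_sub_distrib]
  have h1 : ∑ x ∈ T, 1 / 2 * F x * divg G θ0 x = 1 / 2 * (F p - F q) := by
    rw [Finset.sum_congr rfl fun x _ => by rw [congrFun hdiv x]]
    rw [show (∑ x ∈ T, 1 / 2 * F x * pointSource p q x)
        = 1 / 2 * ∑ x ∈ T, F x * pointSource p q x from by
      rw [Finset.mul_sum]
      exact Finset.sum_congr rfl fun x _ => by ring]
    rw [hS]
  have h2 : ∑ x ∈ T, ∑ y ∈ T, 1 / 2 * F y * θ0 x y = -(1 / 2) * (F p - F q) := by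
    rw [Finset.sum_comm]
    have hin : ∀ y ∈ T, ∑ x ∈ T, 1 / 2 * F y * θ0 x y
        = -(1 / 2) * (F y * pointSource p q y) := by
      intro y _
      rw [show (∑ x ∈ T, 1 / 2 * F y * θ0 x y) = 1 / 2 * F y * ∑ x ∈ T, θ0 x y from by
        rw [Finset.mul_sum]]
      rw [hcol y, congrFun hdiv y]
      ring
    rw [Finset.sum_congr rfl hin, ← Finset.mul_sum, hS]
  rw [h1, h2]
  ring

end OHDaux

section OHDmain

open scoped RealInnerProductSpace
open SimpleGraph

set_option maxHeartbeats 2000000 in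
/-- **Characterization of `O_HD` networks**: all even and odd resistances agree iff every
finite-energy harmonic function is constant. -/
theorem OHD_characterization
    (G : SimpleGraph V) [G.LocallyFinite] (hG : G.Connected)
    (r : V → V → ℝ) (hr_pos : ∀ u v, G.Adj u v → 0 < r u v)
    (hr_symm : ∀ u v, r u v = r v u) :
    (∀ p q : V, p ≠ q → evenRes G r p q = oddRes G r p q) ↔
      ∀ u : V → ℝ, Harmonic G r u → fnEnergy G r u ≠ ⊤ → ∀ v w, u v = u w := by
  classical
  constructor
  · -- even = odd implies every finite-energy harmonic function is constant
    intro h F hharm hfin v w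
    by_contra hne
    have hpq : v ≠ w := fun hc => hne (by rw [hc])
    -- the gradient flow of F
    set ψ : V → V → ℝ := fun x y => if G.Adj x y then (F x - F y) / r x y else 0 with hψdef
    have hψnonadj : ∀ x y, ¬G.Adj x y → ψ x y = 0 := fun x y hxy => by
      simp only [hψdef, if_neg hxy]
    have hψanti : ∀ x y, ψ x y = -ψ y x := by
      intro x y
      by_cases hxy : G.Adj x y
      · simp only [hψdef, if_pos hxy, if_pos hxy.symm]
        rw [hr_symm x y]; ring
      · simp only [hψdef, if_neg hxy, if_neg fun hc : G.Adj y x => hxy hc.symm]; ring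
    have hψgrad : ∀ x y, G.Adj x y → r x y * ψ x y = F x - F y := by
      intro x y hxy
      simp only [hψdef, if_pos hxy]
      rw [mul_div_cancel₀ _ (ne_of_gt (hr_pos x y hxy))]
    have hψfin : energy r ψ ≠ ⊤ := by
      have heq : energy r ψ = fnEnergy G r F := by
        unfold energy fnEnergy
        congr 1
        refine tsum_congr fun e => ?_
        by_cases hxy : G.Adj e.1 e.2
        · rw [if_pos hxy]
          congr 1
          have hr0 : r e.1 e.2 ≠ 0 := ne_of_gt (hr_pos e.1 e.2 hxy)
          rw [← hψgrad e.1 e.2 hxy]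
          field_simp
        · rw [if_neg hxy, hψnonadj e.1 e.2 hxy]
          simp
      rw [heq]; exact hfin
    have hmemχ : Memℓp (fun e : V × V => OHDaux.wgt r e * ψ e.1 e.2) 2 :=
      OHDaux.memℓp_flow hr_pos hψnonadj hψfin
    set χ : OHDaux.LpE V := ⟨_, hmemχ⟩ with hχdef
    have hχcoord : ∀ e : V × V, (χ : ∀ _ : V × V, ℝ) e = OHDaux.wgt r e * ψ e.1 e.2 :=
      fun _ => rfl
    have hEψ : energy r ψ = ENNReal.ofReal (‖χ‖ ^ 2) :=
      OHDaux.energy_eq_norm hr_pos hψnonadj χ hχcoord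
    set a : ℝ := F v - F w with hadef
    have ha : a ≠ 0 := sub_ne_zero.mpr hne
    -- χ is nonzero
    have hχne : χ ≠ 0 := by
      intro hc
      have hψ0 : ∀ x y, G.Adj x y → F x = F y := by
        intro x y hxy
        have h1 : (χ : ∀ _ : V × V, ℝ) (x, y) = 0 := by rw [hc, lp.coeFn_zero]; rfl
        rw [hχcoord (x, y)] at h1
        rcases mul_eq_zero.mp h1 with h2 | h2
        · exact absurd h2 (ne_of_gt (OHDaux.wgt_pos hr_pos hxy))
        · have := hψgrad x y hxy
          rw [show ψ x y = 0 from h2, mul_zero] at this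
          linarith
      exact ha (by rw [hadef, OHDaux.const_of_const_on_edges hψ0 ((hG.preconnected v w).some), sub_self])
    have hχnorm : 0 < ‖χ‖ := norm_pos_iff.mpr hχne
    set c : ℝ := a ^ 2 / ‖χ‖ ^ 2 with hcdef
    have hc : 0 < c := div_pos (by positivity) (by positivity)
    -- a path flow, giving finiteness of the odd resistance
    set W := (hG.preconnected v w).some with hWdef
    have hodd_ne_top : oddRes G r v w ≠ ⊤ := by
      refine ne_top_of_le_ne_top (OHDaux.energy_ne_top_of_finsupp (r := r) (OHDaux.walkSupp W)
        fun e he => OHDaux.walkFlow_supp W he) ?_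
      exact iInf₂_le (OHDaux.walkFlow W)
        ⟨⟨OHDaux.walkFlow_antisymm W, fun x y hxy => OHDaux.walkFlow_nonadj W hxy⟩,
          OHDaux.energy_ne_top_of_finsupp (r := r) (OHDaux.walkSupp W) (fun e he => OHDaux.walkFlow_supp W he),
          OHDaux.divg_walkFlow_eq hpq W⟩
    -- the key estimate
    have key : oddRes G r v w + ENNReal.ofReal c ≤ evenRes G r v w := by
      refine le_iInf₂ fun S hS => le_iInf₂ fun θ0 hθ0 => ?_
      obtain ⟨hfl0, hdiv0, hvan0⟩ := hθ0
      have hsupp : ∀ e ∉ S ×ˢ S, θ0 e.1 e.2 = 0 := by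
        intro e he
        rw [Finset.mem_product] at he
        exact hvan0 e.1 e.2 (by tauto)
      have hmem0 : Memℓp (fun e : V × V => OHDaux.wgt r e * θ0 e.1 e.2) 2 :=
        OHDaux.memℓp_of_finsupp (S ×ˢ S) fun e he => by rw [hsupp e he, mul_zero]
      set f0 : OHDaux.LpE V := ⟨_, hmem0⟩ with hf0def
      have hf0coord : ∀ e : V × V, (f0 : ∀ _ : V × V, ℝ) e = OHDaux.wgt r e * θ0 e.1 e.2 :=
        fun _ => rfl
      have hE0 : energy r θ0 = ENNReal.ofReal (‖f0‖ ^ 2) :=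
        OHDaux.energy_eq_norm hr_pos hfl0.2 f0 hf0coord
      have hinner : ⟪f0, χ⟫ = a := by
        rw [OHDaux.inner_eq_tsum_mul]
        rw [tsum_congr fun e => ?_]
        · exact OHDaux.sum_by_parts hpq hfl0 hdiv0 (S ×ˢ S) hsupp F hψgrad hψnonadj
        · rw [hf0coord e, hχcoord e]
          by_cases hxy : G.Adj e.1 e.2
          · have hsq : OHDaux.wgt r e * θ0 e.1 e.2 * (OHDaux.wgt r e * ψ e.1 e.2)
                = OHDaux.wgt r e ^ 2 * θ0 e.1 e.2 * ψ e.1 e.2 := by ring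
            rw [hsq, show OHDaux.wgt r e = OHDaux.wgt r (e.1, e.2) from rfl,
              OHDaux.sq_wgt hr_pos hxy]
          · rw [hfl0.2 e.1 e.2 hxy]
            ring
      set t : ℝ := a / ‖χ‖ ^ 2 with htdef
      set θ' : V → V → ℝ := fun x y => θ0 x y - t * ψ x y with hθ'def
      set g' : OHDaux.LpE V := f0 - t • χ with hg'def
      have hg'coord : ∀ e : V × V, (g' : ∀ _ : V × V, ℝ) e = OHDaux.wgt r e * θ' e.1 e.2 := by
        intro e
        rw [hg'def, lp.coeFn_sub, Pi.sub_apply, lp.coeFn_smul, Pi.smul_apply, smul_eq_mul,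
          hf0coord e, hχcoord e]
        show OHDaux.wgt r e * θ0 e.1 e.2 - t * (OHDaux.wgt r e * ψ e.1 e.2)
            = OHDaux.wgt r e * (θ0 e.1 e.2 - t * ψ e.1 e.2)
        ring
      have hθ'nonadj : ∀ x y, ¬G.Adj x y → θ' x y = 0 := by
        intro x y hxy
        show θ0 x y - t * ψ x y = 0
        rw [hfl0.2 x y hxy, hψnonadj x y hxy]; ring
      have hθ'anti : ∀ x y, θ' x y = -θ' y x := by
        intro x y
        show θ0 x y - t * ψ x y = -(θ0 y x - t * ψ y x)
        rw [hfl0.1 x y, hψanti x y]; ring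
      have hE' : energy r θ' = ENNReal.ofReal (‖g'‖ ^ 2) :=
        OHDaux.energy_eq_norm hr_pos hθ'nonadj g' hg'coord
      have hdiv' : divg G θ' = pointSource v w := by
        funext x
        have hψdiv : divg G ψ x = 0 := by
          have hterm : ∀ y ∈ G.neighborFinset x, ψ x y = (F x - F y) / r x y := by
            intro y hy
            have hxy : G.Adj x y := by rwa [SimpleGraph.mem_neighborFinset] at hy
            simp only [hψdef, if_pos hxy]
          rw [divg, Finset.sum_congr rfl hterm]
          exact hharm x
        rw [hθ'def, OHDaux.divg_sub θ0 (fun x y => t * ψ x y) x, OHDaux.divg_smul t ψ x,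
          hψdiv, mul_zero, sub_zero, hdiv0]
      have hodd_le : oddRes G r v w ≤ energy r θ' :=
        iInf₂_le θ' ⟨⟨hθ'anti, hθ'nonadj⟩, by rw [hE']; exact ENNReal.ofReal_ne_top, hdiv'⟩
      have hnorm : ‖g'‖ ^ 2 = ‖f0‖ ^ 2 - c := by
        rw [hg'def, norm_sub_sq_real, real_inner_smul_right, hinner, norm_smul]
        rw [hcdef, htdef]
        have h2 : ‖χ‖ ≠ 0 := ne_of_gt hχnorm
        rw [Real.norm_eq_abs]
        rw [mul_pow, sq_abs]
        field_simp
        ring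
      have hcs : c ≤ ‖f0‖ ^ 2 := by
        have hcauchy := real_inner_mul_inner_self_le f0 χ
        rw [hinner, real_inner_self_eq_norm_sq, real_inner_self_eq_norm_sq] at hcauchy
        rw [hcdef, div_le_iff₀ (by positivity)]
        nlinarith [hcauchy]
      calc oddRes G r v w + ENNReal.ofReal c
          ≤ energy r θ' + ENNReal.ofReal c := add_le_add hodd_le le_rfl
        _ = ENNReal.ofReal (‖f0‖ ^ 2 - c) + ENNReal.ofReal c := by rw [hE', hnorm]
        _ = ENNReal.ofReal (‖f0‖ ^ 2 - c + c) := by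
            rw [ENNReal.ofReal_add (by linarith) (le_of_lt hc)]
        _ = ENNReal.ofReal (‖f0‖ ^ 2) := by ring_nf
        _ = energy r θ0 := hE0.symm
    rw [h v w hpq] at key
    have hlt : oddRes G r v w < oddRes G r v w + ENNReal.ofReal c :=
      ENNReal.lt_add_right hodd_ne_top (ENNReal.ofReal_pos.mpr hc).ne'
    exact (lt_irrefl _ (lt_of_lt_of_le hlt key)).elim
  · -- every finite-energy harmonic function constant implies even = odd
    intro hH p q hpq
    set W := (hG.preconnected p q).some with hWdef
    have hWflow : IsFlow G (OHDaux.walkFlow W) :=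
      ⟨OHDaux.walkFlow_antisymm W, fun x y hxy => OHDaux.walkFlow_nonadj W hxy⟩
    have hWdiv : divg G (OHDaux.walkFlow W) = pointSource p q := OHDaux.divg_walkFlow_eq hpq W
    have hWsupp : ∀ e ∉ OHDaux.walkSupp W, OHDaux.walkFlow W e.1 e.2 = 0 :=
      fun e he => OHDaux.walkFlow_supp W he
    refine le_antisymm ?_ ?_
    · -- evenRes ≤ oddRes
      refine le_iInf₂ fun θ hθ => ?_
      obtain ⟨hfl, hfin, hdivθ⟩ := hθ
      refine ENNReal.le_of_forall_pos_le_add fun ε hε _ => ?_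
      have hmemf : Memℓp (fun e : V × V => OHDaux.wgt r e * θ e.1 e.2) 2 :=
        OHDaux.memℓp_flow hr_pos hfl.2 hfin
      set f : OHDaux.LpE V := ⟨_, hmemf⟩ with hfdef
      have hfcoord : ∀ e : V × V, (f : ∀ _ : V × V, ℝ) e = OHDaux.wgt r e * θ e.1 e.2 :=
        fun _ => rfl
      have hEf : energy r θ = ENNReal.ofReal (‖f‖ ^ 2) :=
        OHDaux.energy_eq_norm hr_pos hfl.2 f hfcoord
      have hmemf0 : Memℓp (fun e : V × V => OHDaux.wgt r e * OHDaux.walkFlow W e.1 e.2) 2 :=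
        OHDaux.memℓp_of_finsupp (OHDaux.walkSupp W) fun e he => by rw [hWsupp e he, mul_zero]
      set f0 : OHDaux.LpE V := ⟨_, hmemf0⟩ with hf0def
      have hf0coord : ∀ e : V × V,
          (f0 : ∀ _ : V × V, ℝ) e = OHDaux.wgt r e * OHDaux.walkFlow W e.1 e.2 := fun _ => rfl
      have hsubcoord : ∀ e : V × V, ((f - f0 : OHDaux.LpE V) : ∀ _ : V × V, ℝ) e
          = OHDaux.wgt r e * (θ e.1 e.2 - OHDaux.walkFlow W e.1 e.2) := by
        intro e
        rw [lp.coeFn_sub, Pi.sub_apply, hfcoord e, hf0coord e]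
        ring
      have hsub : f - f0 ∈ OHDaux.srcFree G r := by
        refine ⟨fun x y => ?_, fun x y hxy => ?_, fun x => ?_⟩
        · rw [hsubcoord (x, y), hsubcoord (y, x)]
          show OHDaux.wgt r (x, y) * (θ x y - OHDaux.walkFlow W x y)
              = -(OHDaux.wgt r (y, x) * (θ y x - OHDaux.walkFlow W y x))
          rw [OHDaux.wgt_symm hr_symm x y, hfl.1 x y, OHDaux.walkFlow_antisymm W x y]
          ring
        · rw [hsubcoord (x, y)]
          show OHDaux.wgt r (x, y) * (θ x y - OHDaux.walkFlow W x y) = 0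
          rw [hfl.2 x y hxy, OHDaux.walkFlow_nonadj W hxy]
          ring
        · have hterm : ∀ y ∈ G.neighborFinset x,
              ((f - f0 : OHDaux.LpE V) : ∀ _ : V × V, ℝ) (x, y) * (OHDaux.wgt r (x, y))⁻¹
              = θ x y - OHDaux.walkFlow W x y := by
            intro y hy
            have hxy : G.Adj x y := by rwa [SimpleGraph.mem_neighborFinset] at hy
            rw [hsubcoord (x, y), mul_comm (OHDaux.wgt r (x, y)), mul_assoc,
              mul_inv_cancel₀ (ne_of_gt (OHDaux.wgt_pos hr_pos hxy)), mul_one]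
          rw [Finset.sum_congr rfl hterm, Finset.sum_sub_distrib]
          rw [show (∑ y ∈ G.neighborFinset x, θ x y) = divg G θ x from rfl,
            show (∑ y ∈ G.neighborFinset x, OHDaux.walkFlow W x y) = divg G (OHDaux.walkFlow W) x from rfl,
            hdivθ, hWdiv, sub_self]
      have hclos := OHDaux.srcFree_le_closure hG hr_pos hr_symm hH hsub
      set εr : ℝ := (ε : ℝ) with hεr
      have hεrpos : 0 < εr := hε
      set δ : ℝ := min 1 (εr / (2 * ‖f‖ + 1)) with hδdef
      have hδpos : 0 < δ := lt_min one_pos (div_pos hεrpos (by positivity))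
      have hmemclos : (f - f0 : OHDaux.LpE V) ∈ closure ((OHDaux.finFlows G r) : Set (OHDaux.LpE V)) := by
        rw [← Submodule.topologicalClosure_coe]
        exact hclos
      obtain ⟨η, hηmem, hηdist⟩ := Metric.mem_closure_iff.mp hmemclos δ hδpos
      obtain ⟨hη1, hη2, hηfin, hη3⟩ := hηmem
      set ηf : V → V → ℝ :=
        fun x y => if G.Adj x y then (η : ∀ _ : V × V, ℝ) (x, y) / OHDaux.wgt r (x, y) else 0 with hηfdef
      have hηcoord : ∀ e : V × V, (η : ∀ _ : V × V, ℝ) e = OHDaux.wgt r e * ηf e.1 e.2 := by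
        rintro ⟨x, y⟩
        by_cases hxy : G.Adj x y
        · simp only [hηfdef, if_pos hxy]
          rw [mul_div_cancel₀ _ (ne_of_gt (OHDaux.wgt_pos hr_pos hxy))]
        · simp only [hηfdef, if_neg hxy]
          rw [hη2 x y hxy, mul_zero]
      set θ' : V → V → ℝ := fun x y => OHDaux.walkFlow W x y + ηf x y with hθ'def
      have hg'coord : ∀ e : V × V, ((f0 + η : OHDaux.LpE V) : ∀ _ : V × V, ℝ) e
          = OHDaux.wgt r e * θ' e.1 e.2 := by
        intro e
        rw [lp.coeFn_add, Pi.add_apply, hf0coord e, hηcoord e]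
        show OHDaux.wgt r e * OHDaux.walkFlow W e.1 e.2 + OHDaux.wgt r e * ηf e.1 e.2
            = OHDaux.wgt r e * (OHDaux.walkFlow W e.1 e.2 + ηf e.1 e.2)
        ring
      have hθ'nonadj : ∀ x y, ¬G.Adj x y → θ' x y = 0 := by
        intro x y hxy
        show OHDaux.walkFlow W x y + ηf x y = 0
        rw [OHDaux.walkFlow_nonadj W hxy, hηfdef]
        simp [if_neg hxy]
      have hθ'anti : ∀ x y, θ' x y = -θ' y x := by
        intro x y
        show OHDaux.walkFlow W x y + ηf x y = -(OHDaux.walkFlow W y x + ηf y x)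
        have hηanti : ηf x y = -ηf y x := by
          by_cases hxy : G.Adj x y
          · simp only [hηfdef, if_pos hxy, if_pos hxy.symm]
            rw [hη1 x y, OHDaux.wgt_symm hr_symm x y]
            ring
          · simp only [hηfdef, if_neg hxy, if_neg fun hc : G.Adj y x => hxy hc.symm]
            ring
        rw [OHDaux.walkFlow_antisymm W x y, hηanti]
        ring
      have hE' : energy r θ' = ENNReal.ofReal (‖f0 + η‖ ^ 2) :=
        OHDaux.energy_eq_norm hr_pos hθ'nonadj (f0 + η) hg'coord
      have hdiv' : divg G θ' = pointSource p q := by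
        funext x
        have hηdiv : divg G ηf x = 0 := by
          have hterm : ∀ y ∈ G.neighborFinset x,
              ηf x y = (η : ∀ _ : V × V, ℝ) (x, y) * (OHDaux.wgt r (x, y))⁻¹ := by
            intro y hy
            have hxy : G.Adj x y := by rwa [SimpleGraph.mem_neighborFinset] at hy
            simp only [hηfdef, if_pos hxy, div_eq_mul_inv]
          rw [divg, Finset.sum_congr rfl hterm, hη3 x]
        rw [hθ'def, OHDaux.divg_add (OHDaux.walkFlow W) ηf x, hηdiv, add_zero, hWdiv]
      -- the support
      set tset : Finset (V × V) := OHDaux.walkSupp W ∪ hηfin.toFinset with htset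
      have hθ'supp : ∀ e ∉ tset, θ' e.1 e.2 = 0 := by
        intro e he
        rw [htset, Finset.mem_union] at he
        push_neg at he
        show OHDaux.walkFlow W e.1 e.2 + ηf e.1 e.2 = 0
        rw [hWsupp e he.1]
        have hη0 : (η : ∀ _ : V × V, ℝ) e = 0 := by
          by_contra hc
          exact he.2 (Set.Finite.mem_toFinset hηfin |>.mpr hc)
        have : ηf e.1 e.2 = 0 := by
          by_cases hxy : G.Adj e.1 e.2
          · have := hηcoord e
            rw [hη0] at this
            rcases mul_eq_zero.mp this.symm with h' | h'
            · exact absurd h' (ne_of_gt (OHDaux.wgt_pos hr_pos hxy))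
            · exact h'
          · simp only [hηfdef, if_neg hxy]
        rw [this, add_zero]
      set S : Finset V := tset.image Prod.fst ∪ tset.image Prod.snd ∪ {p, q} with hSdef
      have hpS : p ∈ S := Finset.mem_union_right _ (Finset.mem_insert_self _ _)
      have hqS : q ∈ S := Finset.mem_union_right _ (Finset.mem_insert_of_mem (Finset.mem_singleton_self _))
      have hvanish : ∀ x y, (x ∉ S ∨ y ∉ S) → θ' x y = 0 := by
        intro x y hxy
        by_contra hc
        have hmem : ((x, y) : V × V) ∈ tset := by
          by_contra hcc
          exact hc (hθ'supp (x, y) hcc)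
        rcases hxy with hx | hy
        · exact hx (Finset.mem_union_left _ (Finset.mem_union_left _ (Finset.mem_image_of_mem _ hmem)))
        · exact hy (Finset.mem_union_left _ (Finset.mem_union_right _ (Finset.mem_image_of_mem _ hmem)))
      -- put everything together
      have heven_le : evenRes G r p q ≤ energy r θ' := by
        refine le_trans (iInf₂_le S ⟨hpS, hqS⟩) ?_
        exact iInf₂_le θ' ⟨⟨hθ'anti, hθ'nonadj⟩, hdiv', hvanish⟩
      have hnorm_le : ‖f0 + η‖ ≤ ‖f‖ + δ := by
        have h1 : (f0 + η : OHDaux.LpE V) = f - ((f - f0) - η) := by abel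
        rw [h1]
        refine le_trans (norm_sub_le _ _) ?_
        have h2 : ‖(f - f0) - η‖ ≤ δ := by
          rw [← dist_eq_norm]
          exact le_of_lt hηdist
        linarith
      have hsq_le : ‖f0 + η‖ ^ 2 ≤ ‖f‖ ^ 2 + εr := by
        have h1 : ‖f0 + η‖ ^ 2 ≤ (‖f‖ + δ) ^ 2 :=
          pow_le_pow_left₀ (norm_nonneg _) hnorm_le 2
        have h2 : (‖f‖ + δ) ^ 2 = ‖f‖ ^ 2 + δ * (2 * ‖f‖ + δ) := by ring
        have h3 : δ ≤ 1 := min_le_left _ _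
        have h4 : δ ≤ εr / (2 * ‖f‖ + 1) := min_le_right _ _
        have h5 : δ * (2 * ‖f‖ + δ) ≤ δ * (2 * ‖f‖ + 1) :=
          mul_le_mul_of_nonneg_left (by linarith) (le_of_lt hδpos)
        have h6 : δ * (2 * ‖f‖ + 1) ≤ εr := by
          rw [← div_mul_cancel₀ εr (show (2 * ‖f‖ + 1) ≠ 0 by positivity)]
          exact mul_le_mul_of_nonneg_right h4 (by positivity)
        linarith
      calc evenRes G r p q ≤ energy r θ' := heven_le
        _ = ENNReal.ofReal (‖f0 + η‖ ^ 2) := hE'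
        _ ≤ ENNReal.ofReal (‖f‖ ^ 2 + εr) := ENNReal.ofReal_le_ofReal hsq_le
        _ = ENNReal.ofReal (‖f‖ ^ 2) + ENNReal.ofReal εr :=
            ENNReal.ofReal_add (by positivity) (le_of_lt hεrpos)
        _ = energy r θ + ↑ε := by rw [hEf, hεr, ENNReal.ofReal_coe_nnreal]
    · -- oddRes ≤ evenRes
      refine le_iInf₂ fun S hS => le_iInf₂ fun θ hθ => ?_
      obtain ⟨hfl, hdivθ, hvan⟩ := hθ
      refine iInf₂_le θ ⟨hfl, ?_, hdivθ⟩
      refine OHDaux.energy_ne_top_of_finsupp (r := r) (S ×ˢ S) fun e he => ?_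
      rw [Finset.mem_product] at he
      exact hvan e.1 e.2 (by tauto)

end OHDmain
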